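/- Validity of the time-window energy inequality: let J be a finite job set with processing times p_j ≥ 0, resource rates c_j ≥ 0, and capacity C > 0, and let s : J → ℝ be a cumulative schedule. Then for all real numbers t₁ ≤ t₂, the total energy of jobs running entirely within [t₁, t₂] satisfies Σ_{j : t₁ ≤ s_j and s_j + p_j ≤ t₂} p_j c_j ≤ C (t₂ − t₁). In particular, if every job j respects its time window (r_j ≤ s_j and s_j + p_j ≤ d_j), then Σ_{j : t₁ ≤ r_j and d_j ≤ t₂} p_j c_j ≤ C (t₂ − t₁). -/

import Mathlib

open MeasureTheory Set

/-- `s` is a cumulative schedule of the job set `J` with processing times `p`,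
resource consumption rates `c`, and resource capacity `C`: at every time `t`,
the total rate of resource consumption of the jobs running at `t` is at most `C`. -/
def CumulativeSchedule {ι : Type*} (J : Finset ι) (p c : ι → ℝ) (C : ℝ) (s : ι → ℝ) : Prop :=
  ∀ t : ℝ, ∑ j ∈ J.filter (fun j => s j ≤ t ∧ t < s j + p j), c j ≤ C

theorem energy_aux {ι : Type*} (J : Finset ι) (p c : ι → ℝ) (C : ℝ)
    (hC : 0 < C)
    (hp : ∀ j ∈ J, 0 ≤ p j)
    (hc : ∀ j ∈ J, 0 ≤ c j)
    (s : ι → ℝ)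
    (hcum : CumulativeSchedule J p c C s)
    (t₁ t₂ : ℝ) (ht : t₁ ≤ t₂) :
    ∑ j ∈ J.filter (fun j => t₁ ≤ s j ∧ s j + p j ≤ t₂), p j * c j ≤ C * (t₂ - t₁) := by
  set F := J.filter (fun j => t₁ ≤ s j ∧ s j + p j ≤ t₂) with hF
  have hFJ : F ⊆ J := Finset.filter_subset _ _
  -- each term equals an integral
  have hterm : ∀ j ∈ F, p j * c j =
      ∫ t in Ico t₁ t₂, (Ico (s j) (s j + p j)).indicator (fun _ => c j) t := by
    intro j hj
    have hjJ := hFJ hj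
    obtain ⟨-, h1, h2⟩ := Finset.mem_filter.mp hj
    rw [MeasureTheory.setIntegral_indicator measurableSet_Ico,
      Set.inter_eq_self_of_subset_right (Set.Ico_subset_Ico h1 h2),
      MeasureTheory.setIntegral_const, Real.volume_real_Ico_of_le (by linarith [hp j hjJ])]
    rw [smul_eq_mul]; ring
  rw [Finset.sum_congr rfl hterm]
  have hint : ∀ j ∈ F, IntegrableOn
      (fun t => (Ico (s j) (s j + p j)).indicator (fun _ => c j) t) (Ico t₁ t₂) volume := by
    intro j _
    exact ((integrableOn_const_iff).mpr (Or.inr measure_Ico_lt_top) :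
      IntegrableOn (fun _ => c j) (Ico t₁ t₂) volume).indicator measurableSet_Ico
  rw [← MeasureTheory.integral_finset_sum F hint]
  have hbound : ∀ t ∈ Ico t₁ t₂,
      ∑ j ∈ F, (Ico (s j) (s j + p j)).indicator (fun _ => c j) t ≤ C := by
    intro t _
    have : ∑ j ∈ F, (Ico (s j) (s j + p j)).indicator (fun _ => c j) t
        = ∑ j ∈ F.filter (fun j => s j ≤ t ∧ t < s j + p j), c j := by
      refine Eq.trans (Finset.sum_congr rfl fun j _ => ?_) (Finset.sum_filter _ _).symm
      by_cases h : s j ≤ t ∧ t < s j + p j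
      · rw [Set.indicator_of_mem (Set.mem_Ico.mpr h), if_pos h]
      · rw [Set.indicator_of_notMem (fun hm => h (Set.mem_Ico.mp hm)), if_neg h]
    rw [this]
    refine le_trans (Finset.sum_le_sum_of_subset_of_nonneg ?_ ?_) (hcum t)
    · intro j hj
      obtain ⟨hjF, hcond⟩ := Finset.mem_filter.mp hj
      exact Finset.mem_filter.mpr ⟨hFJ hjF, hcond⟩
    · intro j hj _; exact hc j (Finset.filter_subset _ _ hj)
  calc ∫ t in Ico t₁ t₂, ∑ j ∈ F, (Ico (s j) (s j + p j)).indicator (fun _ => c j) t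
      ≤ ∫ _ in Ico t₁ t₂, C := by
        refine MeasureTheory.setIntegral_mono_on
          (MeasureTheory.integrable_finset_sum F hint)
          ((integrableOn_const_iff).mpr (Or.inr measure_Ico_lt_top)) measurableSet_Ico hbound
    _ = C * (t₂ - t₁) := by
        rw [MeasureTheory.setIntegral_const, Real.volume_real_Ico_of_le (by linarith), smul_eq_mul, mul_comm]

/-- Validity of the time-window energy inequality. -/
theorem stmt_12 {ι : Type*} (J : Finset ι) (p c : ι → ℝ) (C : ℝ)
    (hC : 0 < C)
    (hp : ∀ j ∈ J, 0 ≤ p j)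
    (hc : ∀ j ∈ J, 0 ≤ c j)
    (s : ι → ℝ)
    (hcum : CumulativeSchedule J p c C s) :
    (∀ t₁ t₂ : ℝ, t₁ ≤ t₂ →
      ∑ j ∈ J.filter (fun j => t₁ ≤ s j ∧ s j + p j ≤ t₂), p j * c j ≤ C * (t₂ - t₁)) ∧
    (∀ r d : ι → ℝ, (∀ j ∈ J, r j ≤ s j ∧ s j + p j ≤ d j) →
      ∀ t₁ t₂ : ℝ, t₁ ≤ t₂ →
        ∑ j ∈ J.filter (fun j => t₁ ≤ r j ∧ d j ≤ t₂), p j * c j ≤ C * (t₂ - t₁)) := by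
  constructor
  · exact energy_aux J p c C hC hp hc s hcum
  · intro r d hrd t₁ t₂ ht
    refine le_trans (Finset.sum_le_sum_of_subset_of_nonneg ?_ ?_)
      (energy_aux J p c C hC hp hc s hcum t₁ t₂ ht)
    · intro j hj
      obtain ⟨hjJ, h1, h2⟩ := Finset.mem_filter.mp hj
      obtain ⟨hr, hd⟩ := hrd j hjJ
      exact Finset.mem_filter.mpr ⟨hjJ, le_trans h1 hr, le_trans hd h2⟩
    · intro j hj _
      have hjJ := Finset.filter_subset _ _ hj
      exact mul_nonneg (hp j hjJ) (hc j hjJ)
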